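/- Let p ≥ 5 be a prime and q = p^r with r ≥ 1, and let x ∈ F_q be nonzero. Then (1/(q(q−1))) · Σ_χ g(χ)·g(χ²)·g(χ̄³)·χ(−27/(4x)) = 1/q − 1 + N, where the sum runs over all multiplicative characters χ of F_q and N = #{y ∈ F_q : 27y²(1−y) = 4x} is the number of solutions y in F_q of the equation 27y²(1−y) = 4x. -/

import Mathlib

open Finset

private lemma orth_mulChar (F : Type) [Field F] [Fintype F] [DecidableEq F]
    [Fintype (MulChar F ℂ)] (a : F) :
    ∑ χ : MulChar F ℂ, χ a = if a = 1 then ((Fintype.card F : ℂ) - 1) else 0 := by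
  split_ifs with ha
  · subst ha
    simp only [MulChar.map_one, Finset.sum_const, Finset.card_univ, nsmul_eq_mul, mul_one]
    have h1 : Fintype.card (MulChar F ℂ) = Fintype.card F - 1 := by
      rw [← Nat.card_eq_fintype_card, MulChar.card_eq_card_units_of_hasEnoughRootsOfUnity F ℂ,
        Nat.card_eq_fintype_card, Fintype.card_units]
    rw [h1, Nat.cast_sub Fintype.card_pos, Nat.cast_one]
  · obtain ⟨χ, hχ⟩ := MulChar.exists_apply_ne_one_of_hasEnoughRootsOfUnity F ℂ ha
    refine eq_zero_of_mul_eq_self_left hχ ?_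
    simp only [Finset.mul_sum, ← MulChar.mul_apply]
    exact Fintype.sum_bijective _ (Group.mulLeft_bijective χ) _ _ fun χ' ↦ rfl

private lemma triple_sum_mul {F : Type} [Fintype F] (f g h : F → ℂ) (K : ℂ) :
    (∑ a, f a) * (∑ b, g b) * (∑ c, h c) * K = ∑ a, ∑ b, ∑ c, f a * g b * h c * K := by
  simp only [Finset.sum_mul, Finset.mul_sum]
  conv_lhs => rw [Finset.sum_comm]
  refine (Finset.sum_congr rfl fun y _ => Finset.sum_comm).trans ?_
  conv_lhs => rw [Finset.sum_comm]

open Finset in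
theorem stmt_3 (p r : ℕ) (hp : p.Prime) (hp5 : 5 ≤ p) (hr : 1 ≤ r)
    (F : Type) [Field F] [Fintype F] [DecidableEq F]
    (hF : Fintype.card F = p ^ r)
    [Fintype (MulChar F ℂ)]
    (ψ : AddChar F ℂ) (hψ : ψ ≠ 1)
    (x : F) (hx : x ≠ 0) :
    (1 / ((Fintype.card F : ℂ) * ((Fintype.card F : ℂ) - 1))) *
      ∑ χ : MulChar F ℂ,
        gaussSum χ ψ * gaussSum (χ ^ 2) ψ * gaussSum (χ⁻¹ ^ 3) ψ * χ (-27 / (4 * x))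
    = 1 / (Fintype.card F : ℂ) - 1 +
      ((univ.filter fun y : F => 27 * y ^ 2 * (1 - y) = 4 * x).card : ℂ) := by
  classical
  -- characteristic facts
  have hcp : CharP F (ringChar F) := ringChar.charP F
  obtain ⟨n, hrp, hcard⟩ := FiniteField.card F (ringChar F)
  have hpc : ringChar F = p := by
    have hdvd : p ∣ ringChar F ^ (n : ℕ) := by
      rw [← hcard, hF]; exact dvd_pow_self p (by omega)
    exact ((Nat.prime_dvd_prime_iff_eq hp hrp).mp (hp.dvd_of_dvd_pow hdvd)).symm
  rw [hpc] at hcp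
  have h27 : (27 : F) ≠ 0 := by
    have : ((27 : ℕ) : F) ≠ 0 := by
      rw [Ne, CharP.cast_eq_zero_iff F p]
      intro h
      have h3 : p ∣ 3 := hp.dvd_of_dvd_pow (show p ∣ 3 ^ 3 by norm_num; exact h)
      have := Nat.le_of_dvd (by norm_num) h3
      omega
    simpa using this
  have h4 : (4 : F) ≠ 0 := by
    have : ((4 : ℕ) : F) ≠ 0 := by
      rw [Ne, CharP.cast_eq_zero_iff F p]
      intro h
      have h2 : p ∣ 2 := hp.dvd_of_dvd_pow (show p ∣ 2 ^ 2 by norm_num; exact h)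
      have := Nat.le_of_dvd (by norm_num) h2
      omega
    simpa using this
  set u : F := -27 / (4 * x) with hu_def
  have h4x : (4 : F) * x ≠ 0 := mul_ne_zero h4 hx
  have hu : u ≠ 0 := div_ne_zero (neg_ne_zero.mpr h27) h4x
  set qC : ℂ := (Fintype.card F : ℂ) with hqC
  have hq0 : qC ≠ 0 := by
    simp only [hqC, Ne, Nat.cast_eq_zero]
    exact Fintype.card_ne_zero
  have hq1 : qC - 1 ≠ 0 := by
    rw [sub_ne_zero, hqC]
    exact_mod_cast Nat.ne_of_gt Fintype.one_lt_card
  -- the big sum computation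
  have key : ∑ χ : MulChar F ℂ,
      gaussSum χ ψ * gaussSum (χ ^ 2) ψ * gaussSum (χ⁻¹ ^ 3) ψ * χ u
      = (qC - 1) * qC *
          ((univ.filter fun y : F => ¬y = 0 ∧ y ^ 3 * u⁻¹ + 1 + y = 0).card : ℂ)
        - (qC - 1) * (qC - 1) := by
    calc
      ∑ χ : MulChar F ℂ,
          gaussSum χ ψ * gaussSum (χ ^ 2) ψ * gaussSum (χ⁻¹ ^ 3) ψ * χ u
        = ∑ χ : MulChar F ℂ, ∑ a : F, ∑ b : F, ∑ c : F,
            χ (a * b ^ 2 * (c⁻¹) ^ 3 * u) * (ψ a * ψ b * ψ c) := by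
          refine sum_congr rfl fun χ _ => ?_
          rw [gaussSum, gaussSum, gaussSum, triple_sum_mul]
          refine sum_congr rfl fun a _ => sum_congr rfl fun b _ => sum_congr rfl fun c _ => ?_
          rw [map_mul, map_mul, map_mul, map_pow, map_pow,
            ← MulChar.pow_apply' χ (by norm_num) b, ← MulChar.inv_apply' χ c,
            ← MulChar.pow_apply' χ⁻¹ (by norm_num) c]
          ring
      _ = ∑ a : F, ∑ b : F, ∑ c : F,
            (if a * b ^ 2 * (c⁻¹) ^ 3 * u = 1 then qC - 1 else 0) * (ψ a * ψ b * ψ c) := by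
          refine Finset.sum_comm.trans ?_
          refine Finset.sum_congr rfl fun a _ => ?_
          refine Finset.sum_comm.trans ?_
          refine Finset.sum_congr rfl fun b _ => ?_
          refine Finset.sum_comm.trans ?_
          refine Finset.sum_congr rfl fun c _ => ?_
          rw [← Finset.sum_mul, orth_mulChar]
      _ = ∑ b : F, ∑ c : F, ∑ a : F,
            (if a * b ^ 2 * (c⁻¹) ^ 3 * u = 1 then qC - 1 else 0) * (ψ a * ψ b * ψ c) := by
          refine Finset.sum_comm.trans ?_
          exact Finset.sum_congr rfl fun b _ => Finset.sum_comm
      _ = ∑ b : F, ∑ c : F,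
            (if b ≠ 0 ∧ c ≠ 0 then
              (qC - 1) * (ψ ((b ^ 2 * (c⁻¹) ^ 3 * u)⁻¹) * ψ b * ψ c) else 0) := by
          refine sum_congr rfl fun b _ => sum_congr rfl fun c _ => ?_
          by_cases hb : b = 0
          · simp [hb]
          by_cases hc : c = 0
          · simp [hc]
          have hK : b ^ 2 * (c⁻¹) ^ 3 * u ≠ 0 :=
            mul_ne_zero (mul_ne_zero (pow_ne_zero _ hb) (pow_ne_zero _ (inv_ne_zero hc))) hu
          rw [if_pos ⟨hb, hc⟩]
          have hiff : ∀ a : F, (a * b ^ 2 * (c⁻¹) ^ 3 * u = 1)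
              ↔ a = (b ^ 2 * (c⁻¹) ^ 3 * u)⁻¹ := fun a => by
            rw [show a * b ^ 2 * (c⁻¹) ^ 3 * u = a * (b ^ 2 * (c⁻¹) ^ 3 * u) from by ring,
              mul_eq_one_iff_eq_inv₀ hK]
          simp only [hiff, ite_mul, zero_mul]
          rw [Finset.sum_ite_eq' univ]
          simp only [mem_univ, if_true]
      _ = ∑ b : F, ∑ y : F,
            (if b ≠ 0 ∧ y ≠ 0 then
              (qC - 1) * ψ (b * (y ^ 3 * u⁻¹ + 1 + y)) else 0) := by
          refine sum_congr rfl fun b _ => ?_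
          by_cases hb : b = 0
          · simp [hb]
          refine (Fintype.sum_equiv (Equiv.mulLeft₀ b hb) _ _ fun y => ?_).symm
          simp only [Equiv.mulLeft₀_apply]
          by_cases hy : y = 0
          · simp [hy, hb]
          have hby : b * y ≠ 0 := mul_ne_zero hb hy
          rw [if_pos ⟨hb, hy⟩, if_pos ⟨hb, hby⟩]
          rw [← AddChar.map_add_eq_mul, ← AddChar.map_add_eq_mul]
          congr 2
          field_simp
      _ = ∑ y : F,
            (if y ≠ 0 then (qC - 1) * ((if y ^ 3 * u⁻¹ + 1 + y = 0 then qC else 0) - 1)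
              else 0) := by
          refine Finset.sum_comm.trans ?_
          refine Finset.sum_congr rfl fun y _ => ?_
          by_cases hy : y = 0
          · simp [hy]
          rw [if_pos hy]
          calc
            ∑ b : F, (if b ≠ 0 ∧ y ≠ 0 then
                (qC - 1) * ψ (b * (y ^ 3 * u⁻¹ + 1 + y)) else 0)
              = ∑ b : F, ((qC - 1) * ψ (b * (y ^ 3 * u⁻¹ + 1 + y))
                  - if b = 0 then (qC - 1) * ψ (b * (y ^ 3 * u⁻¹ + 1 + y)) else 0) := by
                refine sum_congr rfl fun b _ => ?_
                by_cases hb : b = 0 <;> simp [hb, hy]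
            _ = (qC - 1) * (∑ b : F, ψ (b * (y ^ 3 * u⁻¹ + 1 + y))) - (qC - 1) := by
                rw [Finset.sum_sub_distrib, ← Finset.mul_sum, Finset.sum_ite_eq' univ]
                simp
            _ = (qC - 1) * ((if y ^ 3 * u⁻¹ + 1 + y = 0 then qC else 0) - 1) := by
                rw [AddChar.sum_mulShift _ (AddChar.IsPrimitive.of_ne_one hψ)]
                simp only [apply_ite (Nat.cast : ℕ → ℂ), Nat.cast_zero, ← hqC]
                ring
      _ = (qC - 1) * qC *
            ((univ.filter fun y : F => ¬y = 0 ∧ y ^ 3 * u⁻¹ + 1 + y = 0).card : ℂ)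
          - (qC - 1) * (qC - 1) := by
          have hsplit : ∀ y : F,
              (if y ≠ 0 then (qC - 1) * ((if y ^ 3 * u⁻¹ + 1 + y = 0 then qC else 0) - 1)
                else 0)
              = (qC - 1) * qC * (if ¬y = 0 ∧ y ^ 3 * u⁻¹ + 1 + y = 0 then 1 else 0)
                - (qC - 1) * (if ¬y = 0 then 1 else 0) := by
            intro y
            by_cases hy : y = 0 <;> by_cases hv : y ^ 3 * u⁻¹ + 1 + y = 0 <;>
              first
                | (simp [hy, hv]; ring)
                | simp [hy, hv]
          rw [Finset.sum_congr rfl fun y _ => hsplit y, Finset.sum_sub_distrib,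
            ← Finset.mul_sum, ← Finset.mul_sum, Finset.sum_boole, Finset.sum_boole]
          have hcer : (univ.filter fun y : F => ¬y = 0).card = Fintype.card F - 1 := by
            simp [Finset.filter_ne', Finset.card_erase_of_mem]
          rw [hcer, Nat.cast_sub Fintype.card_pos, Nat.cast_one]
  -- identify the two solution counts
  have hMN : (univ.filter fun y : F => ¬y = 0 ∧ y ^ 3 * u⁻¹ + 1 + y = 0).card
      = (univ.filter fun y : F => 27 * y ^ 2 * (1 - y) = 4 * x).card := by
    have hui : u⁻¹ = (4 * x) / (-27) := by rw [hu_def, inv_div]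
    refine Finset.card_nbij' (fun y => -y⁻¹) (fun z => -z⁻¹) ?_ ?_ ?_ ?_
    · intro y hy
      simp only [mem_coe, mem_filter, mem_univ, true_and] at hy ⊢
      obtain ⟨hy0, hcond⟩ := hy
      rw [hui] at hcond
      have h27' : (-27 : F) ≠ 0 := neg_ne_zero.mpr h27
      field_simp at hcond ⊢
      linear_combination hcond
    · intro z hz
      simp only [mem_coe, mem_filter, mem_univ, true_and] at hz ⊢
      have hz0 : z ≠ 0 := by
        rintro rfl
        rw [show (27:F) * 0 ^ 2 * (1 - 0) = 0 from by ring] at hz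
        exact h4x hz.symm
      refine ⟨neg_ne_zero.mpr (inv_ne_zero hz0), ?_⟩
      rw [hui]
      have h27' : (-27 : F) ≠ 0 := neg_ne_zero.mpr h27
      field_simp
      linear_combination -hz
    · intro y hy
      simp [inv_neg, inv_inv]
    · intro z hz
      simp [inv_neg, inv_inv]
  rw [key, hMN]
  field_simp
  ring
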